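/- If a variety V has a Taylor term, then for any A ∈ V and any congruences α, β ∈ Con(A) the following are equivalent: (a) [β,α] = 0 and [α, α ∩ β] = 0; (b) Δ_{α,β} is disjoint from both coordinate projection kernels of A(α) (i.e., η1 ∩ Δ_{α,β} = 0 and η2 ∩ Δ_{α,β} = 0); (c) [α,β] = 0 and [β, α ∩ β] = 0; (d) Δ_{β,α} is disjoint from both coordinate projection kernels of A(β). In particular, V satisfies the quasi-identity: [β,α] = 0 and [α, α ∩ β] = 0 imply [α,β] = 0. -/

import Mathlib

/-- A (universal-algebraic) signature: a type of operation symbols with arities. -/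
structure Sig where
  ops : Type
  arity : ops → ℕ

/-- An algebra for a signature: a carrier set with an interpretation of each
operation symbol. -/
structure Alg (σ : Sig) where
  carrier : Type
  interp : ∀ f : σ.ops, (Fin (σ.arity f) → carrier) → carrier

/-- Terms over a signature with variables from `V`. -/
inductive Trm (σ : Sig) (V : Type) : Type
  | var : V → Trm σ V
  | op : (f : σ.ops) → (Fin (σ.arity f) → Trm σ V) → Trm σ V

/-- Evaluation of a term in an algebra under an assignment of the variables. -/
def Alg.evalTrm {σ : Sig} (A : Alg σ) {V : Type} (asg : V → A.carrier) :
    Trm σ V → A.carrier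
  | .var v => asg v
  | .op f ts => A.interp f fun i => A.evalTrm asg (ts i)

/-- A congruence on an algebra: an equivalence relation compatible with the
basic operations. -/
structure Congruence {σ : Sig} (A : Alg σ) where
  rel : A.carrier → A.carrier → Prop
  iseqv : Equivalence rel
  compat : ∀ (f : σ.ops) (a b : Fin (σ.arity f) → A.carrier),
    (∀ i, rel (a i) (b i)) → rel (A.interp f a) (A.interp f b)

namespace Congruence

variable {σ : Sig} {A : Alg σ}

theorem ext' {c d : Congruence A} (h : c.rel = d.rel) : c = d := by
  cases c; cases d; cases h; rfl

instance : PartialOrder (Congruence A) where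
  le c d := ∀ a b, c.rel a b → d.rel a b
  le_refl c a b h := h
  le_trans c d e h1 h2 a b h := h2 a b (h1 a b h)
  le_antisymm c d h1 h2 :=
    ext' (funext fun a => funext fun b => propext ⟨h1 a b, h2 a b⟩)

instance : InfSet (Congruence A) where
  sInf S :=
    { rel := fun a b => ∀ c ∈ S, c.rel a b
      iseqv := ⟨fun a c _ => c.iseqv.refl a,
                fun h c hc => c.iseqv.symm (h c hc),
                fun h1 h2 c hc => c.iseqv.trans (h1 c hc) (h2 c hc)⟩
      compat := fun f a b h c hc => c.compat f a b fun i => h i c hc }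

/-- The congruences of an algebra form a complete lattice (`⊥` is the equality
congruence, `⊤` is the total congruence, meet is intersection). -/
instance : CompleteLattice (Congruence A) :=
  completeLatticeOfInf _ fun S =>
    ⟨fun c hc a b h => h c hc, fun c hc a b h d hd => hc hd a b h⟩

end Congruence

/-- `Centralizes S T δ` is the centralizer relation `C(S,T;δ)`: for every
`S,T`-matrix `[[p,q],[r,s]]` (built from a term operation `t`, tuples `a S b`
and `u T v`), if `(p,q) ∈ δ` then `(r,s) ∈ δ`. -/
def Centralizes {σ : Sig} {A : Alg σ} (S T δ : Congruence A) : Prop :=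
  ∀ (m n : ℕ) (t : Trm σ (Sum (Fin m) (Fin n)))
    (a b : Fin m → A.carrier) (u v : Fin n → A.carrier),
    (∀ i, S.rel (a i) (b i)) → (∀ j, T.rel (u j) (v j)) →
    δ.rel (A.evalTrm (Sum.elim a u) t) (A.evalTrm (Sum.elim a v) t) →
    δ.rel (A.evalTrm (Sum.elim b u) t) (A.evalTrm (Sum.elim b v) t)

/-- The commC `[S,T]`: the least congruence `δ` with `C(S,T;δ)`. -/
def commC {σ : Sig} {A : Alg σ} (S T : Congruence A) : Congruence A :=
  sInf {δ | Centralizes S T δ}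

/-- The relative commC `[S,T]_ε`: the intersection of all congruences
`γ ≥ ε` with `C(S,T;γ)`. -/
def relCommC {σ : Sig} {A : Alg σ} (S T ε : Congruence A) : Congruence A :=
  sInf {γ | ε ≤ γ ∧ Centralizes S T γ}

/-- The congruence generated by a single pair `(x, y)`. -/
def cgPair {σ : Sig} (A : Alg σ) (x y : A.carrier) : Congruence A :=
  sInf {c | c.rel x y}

/-- Homomorphisms of algebras. -/
structure UAHom {σ : Sig} (A B : Alg σ) where
  toFun : A.carrier → B.carrier
  map_op : ∀ (f : σ.ops) (a : Fin (σ.arity f) → A.carrier),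
    toFun (A.interp f a) = B.interp f (fun i => toFun (a i))

/-- The product of a family of algebras. -/
def prodAlg {σ : Sig} {I : Type} (F : I → Alg σ) : Alg σ where
  carrier := ∀ i, (F i).carrier
  interp f a := fun i => (F i).interp f (fun j => a j i)

/-- A variety: a class of algebras of a fixed signature closed under
homomorphic images, subalgebras (here: isomorphic copies of subalgebras,
i.e. sources of injective homomorphisms), and arbitrary products. -/
structure Variety (σ : Sig) where
  Mem : Alg σ → Prop
  closed_hom : ∀ {A B : Alg σ}, Mem A →
    (∃ h : UAHom A B, Function.Surjective h.toFun) → Mem B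
  closed_sub : ∀ {A B : Alg σ}, Mem A →
    (∃ h : UAHom B A, Function.Injective h.toFun) → Mem B
  closed_prod : ∀ {I : Type} (F : I → Alg σ), (∀ i, Mem (F i)) → Mem (prodAlg F)

/-- The setoid associated with a congruence. -/
def Congruence.setoid {σ : Sig} {A : Alg σ} (c : Congruence A) :
    Setoid A.carrier := ⟨c.rel, c.iseqv⟩

/-- The quotient algebra of an algebra by a congruence. -/
noncomputable def quotAlg {σ : Sig} (A : Alg σ) (c : Congruence A) : Alg σ where
  carrier := Quotient c.setoid
  interp f a := Quotient.mk c.setoid (A.interp f fun i => (a i).out)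

/-- `algOn A α` is the algebra `A(α)`: the subalgebra of `A × A` whose
universe is `α`. -/
def algOn {σ : Sig} (A : Alg σ) (α : Congruence A) : Alg σ where
  carrier := {p : A.carrier × A.carrier // α.rel p.1 p.2}
  interp f a := ⟨(A.interp f fun i => (a i).1.1, A.interp f fun i => (a i).1.2),
    α.compat f _ _ fun i => (a i).2⟩

/-- The kernel of the first coordinate projection of `A(α)`. -/
def eta1 {σ : Sig} (A : Alg σ) (α : Congruence A) : Congruence (algOn A α) where
  rel p q := p.1.1 = q.1.1
  iseqv := ⟨fun _ => rfl, Eq.symm, Eq.trans⟩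
  compat f a b h := congrArg (A.interp f) (funext h)

/-- The kernel of the second coordinate projection of `A(α)`. -/
def eta2 {σ : Sig} (A : Alg σ) (α : Congruence A) : Congruence (algOn A α) where
  rel p q := p.1.2 = q.1.2
  iseqv := ⟨fun _ => rfl, Eq.symm, Eq.trans⟩
  compat f a b h := congrArg (A.interp f) (funext h)

/-- The congruence `Δ_{α,β}` on `A(α)` generated by the `β`-diagonal pairs. -/
def diagDelta {σ : Sig} (A : Alg σ) (α β : Congruence A) :
    Congruence (algOn A α) :=
  sInf {c | ∀ x z : A.carrier, β.rel x z →
    c.rel ⟨(x, x), α.iseqv.refl x⟩ ⟨(z, z), α.iseqv.refl z⟩}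

/-- A pentagon (five-element sublattice isomorphic to `N₅`) in the congruence
lattice with bottom `z`, side element `β`, critical chain `δ < θ`, and top `α`. -/
def IsPentagon {σ : Sig} {A : Alg σ} (z β δ θ α : Congruence A) : Prop :=
  δ < θ ∧ β ⊓ θ = z ∧ β ⊓ δ = z ∧ β ⊔ δ = α ∧ β ⊔ θ = α

/-- Two congruences permute: `c ∘ d = d ∘ c`. -/
def Permutes {σ : Sig} {A : Alg σ} (c d : Congruence A) : Prop :=
  ∀ a b : A.carrier, (∃ x, c.rel a x ∧ d.rel x b) ↔ (∃ x, d.rel a x ∧ c.rel x b)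

/-- `T` is a Taylor term for the variety `V`: an idempotent term satisfying an
`i`-th place Taylor identity for every place `i`. -/
def IsTaylorTrm {σ : Sig} (V : Variety σ) {n : ℕ} (T : Trm σ (Fin n)) : Prop :=
  0 < n ∧
  (∀ A : Alg σ, V.Mem A → ∀ c : A.carrier, A.evalTrm (fun _ => c) T = c) ∧
  (∀ i : Fin n, ∃ w z : Fin n → Bool, w i ≠ z i ∧
    ∀ A : Alg σ, V.Mem A → ∀ x y : A.carrier,
      A.evalTrm (fun j => cond (w j) x y) T = A.evalTrm (fun j => cond (z j) x y) T)

/-- `V` has a Taylor term. -/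
def HasTaylorTrm {σ : Sig} (V : Variety σ) : Prop :=
  ∃ (n : ℕ) (T : Trm σ (Fin n)), IsTaylorTrm V T

/-- A congruence is abelian if `[α,α] = 0`. -/
def IsAbelianCong {σ : Sig} {A : Alg σ} (α : Congruence A) : Prop :=
  commC α α = ⊥

/-- `d` is a weak difference term for `V`: `d(a,a,b) = b` and `d(a,b,b) = a`
whenever the pair `(a,b)` lies in an abelian congruence of a member of `V`. -/
def IsWeakDifferenceTrm {σ : Sig} (V : Variety σ) (d : Trm σ (Fin 3)) : Prop :=
  ∀ A : Alg σ, V.Mem A → ∀ α : Congruence A, IsAbelianCong α →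
    ∀ a b : A.carrier, α.rel a b →
      A.evalTrm ![a, a, b] d = b ∧ A.evalTrm ![a, b, b] d = a

/-- `d` is a difference term for `V`: `V ⊨ d(x,x,y) ≈ y` and `d(a,b,b) = a`
whenever the pair `(a,b)` lies in an abelian congruence of a member of `V`. -/
def IsDifferenceTrm {σ : Sig} (V : Variety σ) (d : Trm σ (Fin 3)) : Prop :=
  (∀ A : Alg σ, V.Mem A → ∀ a b : A.carrier, A.evalTrm ![a, a, b] d = b) ∧
  (∀ A : Alg σ, V.Mem A → ∀ α : Congruence A, IsAbelianCong α →
    ∀ a b : A.carrier, α.rel a b → A.evalTrm ![a, b, b] d = a)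

/-- The commC is left distributive throughout `V`. -/
def CommLeftDistrib {σ : Sig} (V : Variety σ) : Prop :=
  ∀ A : Alg σ, V.Mem A → ∀ x y z : Congruence A,
    commC (x ⊔ y) z = commC x z ⊔ commC y z

/-- The commC is right distributive throughout `V`. -/
def CommRightDistrib {σ : Sig} (V : Variety σ) : Prop :=
  ∀ A : Alg σ, V.Mem A → ∀ x y z : Congruence A,
    commC x (y ⊔ z) = commC x y ⊔ commC x z

/-- The commC is commutative throughout `V`. -/
def CommutativeCommutator {σ : Sig} (V : Variety σ) : Prop :=
  ∀ A : Alg σ, V.Mem A → ∀ x y : Congruence A, commC x y = commC y x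

/-- `V` is congruence modular. -/
def CongruenceModular {σ : Sig} (V : Variety σ) : Prop :=
  ∀ A : Alg σ, V.Mem A → IsModularLattice (Congruence A)

section RefinementAux

variable {σ : Sig} {A : Alg σ}

/-- The equality congruence. -/
def eqCong (A : Alg σ) : Congruence A where
  rel a b := a = b
  iseqv := ⟨fun _ => rfl, Eq.symm, Eq.trans⟩
  compat f a b h := congrArg (A.interp f) (funext h)

lemma eqCong_le (X : Congruence A) : eqCong A ≤ X := by
  intro a b h
  cases h
  exact X.iseqv.refl a

lemma eqCong_eq_bot : eqCong A = (⊥ : Congruence A) :=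
  le_antisymm (eqCong_le ⊥) bot_le

lemma bot_rel_iff {a b : A.carrier} : (⊥ : Congruence A).rel a b ↔ a = b := by
  rw [← eqCong_eq_bot]
  exact Iff.rfl

lemma cong_eq_bot_iff (X : Congruence A) : X = ⊥ ↔ ∀ a b, X.rel a b → a = b := by
  constructor
  · intro h a b hr
    rw [h] at hr
    exact bot_rel_iff.mp hr
  · intro h
    refine le_antisymm (fun a b hr => ?_) bot_le
    exact bot_rel_iff.mpr (h a b hr)

/-- The intersection congruence. -/
def interCong (c d : Congruence A) : Congruence A where
  rel a b := c.rel a b ∧ d.rel a b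
  iseqv := ⟨fun a => ⟨c.iseqv.refl a, d.iseqv.refl a⟩,
            fun h => ⟨c.iseqv.symm h.1, d.iseqv.symm h.2⟩,
            fun h1 h2 => ⟨c.iseqv.trans h1.1 h2.1, d.iseqv.trans h1.2 h2.2⟩⟩
  compat f a b h := ⟨c.compat f a b fun i => (h i).1, d.compat f a b fun i => (h i).2⟩

lemma inf_rel_iff (c d : Congruence A) (a b : A.carrier) :
    (c ⊓ d).rel a b ↔ c.rel a b ∧ d.rel a b := by
  constructor
  · intro h
    exact ⟨(inf_le_left : c ⊓ d ≤ c) a b h, (inf_le_right : c ⊓ d ≤ d) a b h⟩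
  · intro h
    have hle : interCong c d ≤ c ⊓ d :=
      le_inf (fun a b h => h.1) (fun a b h => h.2)
    exact hle a b h

lemma evalCongr (c : Congruence A) {V : Type} (t : Trm σ V) {f g : V → A.carrier}
    (h : ∀ v, c.rel (f v) (g v)) :
    c.rel (A.evalTrm f t) (A.evalTrm g t) := by
  induction t with
  | var v => exact h v
  | op F ts ih => exact c.compat F _ _ fun i => ih i

lemma evalOn_fst (α : Congruence A) {V : Type} (t : Trm σ V)
    (F : V → (algOn A α).carrier) :
    ((algOn A α).evalTrm F t).1.1 = A.evalTrm (fun v => (F v).1.1) t := by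
  induction t with
  | var v => rfl
  | op f ts ih =>
      show A.interp f _ = A.interp f _
      exact congrArg (A.interp f) (funext fun i => ih i)

lemma evalOn_snd (α : Congruence A) {V : Type} (t : Trm σ V)
    (F : V → (algOn A α).carrier) :
    ((algOn A α).evalTrm F t).1.2 = A.evalTrm (fun v => (F v).1.2) t := by
  induction t with
  | var v => rfl
  | op f ts ih =>
      show A.interp f _ = A.interp f _
      exact congrArg (A.interp f) (funext fun i => ih i)

lemma diagDelta_gen (α β : Congruence A) {x z : A.carrier} (h : β.rel x z) :
    (diagDelta A α β).rel ⟨(x, x), α.iseqv.refl x⟩ ⟨(z, z), α.iseqv.refl z⟩ :=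
  fun c hc => hc x z h

lemma centralizes_commC (S T : Congruence A) : Centralizes S T (commC S T) :=
  fun m n t a b u v hS hT hprem δ hδ =>
    hδ m n t a b u v hS hT (hprem δ hδ)

lemma commC_eq_bot_iff (S T : Congruence A) :
    commC S T = ⊥ ↔ Centralizes S T ⊥ := by
  constructor
  · intro h
    rw [← h]
    exact centralizes_commC S T
  · intro h
    exact le_antisymm (sInf_le h) bot_le

/-- The easy transfer: (b) for `(α, β)` implies (c) for `(α, β)`. -/
lemma key_bc (α β : Congruence A)
    (h1 : eta1 A α ⊓ diagDelta A α β = ⊥)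
    (h2 : eta2 A α ⊓ diagDelta A α β = ⊥) :
    commC α β = ⊥ ∧ commC β (α ⊓ β) = ⊥ := by
  set B := algOn A α with hB
  constructor
  · rw [commC_eq_bot_iff]
    intro m n t a b u v hab huv hprem
    replace hprem := bot_rel_iff.mp hprem
    set F : Sum (Fin m) (Fin n) → B.carrier :=
      Sum.elim (fun i => ⟨(a i, b i), hab i⟩)
        (fun j => ⟨(u j, u j), α.iseqv.refl _⟩) with hF
    set G : Sum (Fin m) (Fin n) → B.carrier :=
      Sum.elim (fun i => ⟨(a i, b i), hab i⟩)
        (fun j => ⟨(v j, v j), α.iseqv.refl _⟩) with hG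
    have hΔ : (diagDelta A α β).rel (B.evalTrm F t) (B.evalTrm G t) := by
      refine evalCongr _ t ?_
      rintro (i | j)
      · exact (diagDelta A α β).iseqv.refl _
      · exact diagDelta_gen α β (huv j)
    have hη : (eta1 A α).rel (B.evalTrm F t) (B.evalTrm G t) := by
      show (B.evalTrm F t).1.1 = (B.evalTrm G t).1.1
      rw [evalOn_fst, evalOn_fst]
      have e1 : (fun v => (F v).1.1) = Sum.elim a u := by
        funext v; cases v <;> rfl
      have e2 : (fun v => (G v).1.1) = Sum.elim a v := by
        funext v; cases v <;> rfl
      rw [e1, e2]; exact hprem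
    have : (eta1 A α ⊓ diagDelta A α β).rel (B.evalTrm F t) (B.evalTrm G t) :=
      (inf_rel_iff _ _ _ _).mpr ⟨hη, hΔ⟩
    rw [h1] at this
    have heq := bot_rel_iff.mp this
    refine bot_rel_iff.mpr ?_
    have e1 : (fun v => (F v).1.2) = Sum.elim b u := by
      funext v; cases v <;> rfl
    have e2 : (fun v => (G v).1.2) = Sum.elim b v := by
      funext v; cases v <;> rfl
    calc A.evalTrm (Sum.elim b u) t = (B.evalTrm F t).1.2 := by rw [evalOn_snd, e1]
      _ = (B.evalTrm G t).1.2 := by rw [heq]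
      _ = A.evalTrm (Sum.elim b v) t := by rw [evalOn_snd, e2]
  · rw [commC_eq_bot_iff]
    intro m n t a b u v hab huv hprem
    replace hprem := bot_rel_iff.mp hprem
    have huvα : ∀ j, α.rel (u j) (v j) :=
      fun j => ((inf_rel_iff α β _ _).mp (huv j)).1
    have huvβ : ∀ j, β.rel (u j) (v j) :=
      fun j => ((inf_rel_iff α β _ _).mp (huv j)).2
    set F : Sum (Fin m) (Fin n) → B.carrier :=
      Sum.elim (fun i => ⟨(a i, a i), α.iseqv.refl _⟩)
        (fun j => ⟨(u j, v j), huvα j⟩) with hF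
    set G : Sum (Fin m) (Fin n) → B.carrier :=
      Sum.elim (fun i => ⟨(b i, b i), α.iseqv.refl _⟩)
        (fun j => ⟨(u j, v j), huvα j⟩) with hG
    have hΔ : (diagDelta A α β).rel (B.evalTrm F t) (B.evalTrm G t) := by
      refine evalCongr _ t ?_
      rintro (i | j)
      · exact diagDelta_gen α β (hab i)
      · exact (diagDelta A α β).iseqv.refl _
    -- names
    have eF1 : (B.evalTrm F t).1.1 = A.evalTrm (Sum.elim a u) t := by
      rw [evalOn_fst]
      congr 1
      funext v; cases v <;> rfl
    have eF2 : (B.evalTrm F t).1.2 = A.evalTrm (Sum.elim a v) t := by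
      rw [evalOn_snd]
      congr 1
      funext v; cases v <;> rfl
    have eG1 : (B.evalTrm G t).1.1 = A.evalTrm (Sum.elim b u) t := by
      rw [evalOn_fst]
      congr 1
      funext v; cases v <;> rfl
    have eG2 : (B.evalTrm G t).1.2 = A.evalTrm (Sum.elim b v) t := by
      rw [evalOn_snd]
      congr 1
      funext v; cases v <;> rfl
    -- P := t[a,u] = t[a,v] ; s := t[b,v]
    have hPs : β.rel (A.evalTrm (Sum.elim a u) t) (A.evalTrm (Sum.elim b v) t) := by
      rw [hprem]
      refine evalCongr _ t ?_
      rintro (i | j)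
      · exact hab i
      · exact β.iseqv.refl _
    have hPα : α.rel (A.evalTrm (Sum.elim a u) t) (A.evalTrm (Sum.elim a u) t) :=
      α.iseqv.refl _
    have hFval : B.evalTrm F t =
        ⟨(A.evalTrm (Sum.elim a u) t, A.evalTrm (Sum.elim a u) t), α.iseqv.refl _⟩ := by
      apply Subtype.ext
      apply Prod.ext
      · rw [eF1]
      · rw [eF2, ← hprem]
    have hgen : (diagDelta A α β).rel
        ⟨(A.evalTrm (Sum.elim a u) t, A.evalTrm (Sum.elim a u) t), α.iseqv.refl _⟩
        ⟨(A.evalTrm (Sum.elim b v) t, A.evalTrm (Sum.elim b v) t), α.iseqv.refl _⟩ :=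
      diagDelta_gen α β hPs
    have hΔ2 : (diagDelta A α β).rel (B.evalTrm G t)
        ⟨(A.evalTrm (Sum.elim b v) t, A.evalTrm (Sum.elim b v) t), α.iseqv.refl _⟩ := by
      refine (diagDelta A α β).iseqv.trans ((diagDelta A α β).iseqv.symm ?_) hgen
      rw [← hFval]
      exact hΔ
    have hη2 : (eta2 A α).rel (B.evalTrm G t)
        ⟨(A.evalTrm (Sum.elim b v) t, A.evalTrm (Sum.elim b v) t), α.iseqv.refl _⟩ := by
      show (B.evalTrm G t).1.2 = _
      rw [eG2]
    have hboth : (eta2 A α ⊓ diagDelta A α β).rel (B.evalTrm G t)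
        ⟨(A.evalTrm (Sum.elim b v) t, A.evalTrm (Sum.elim b v) t), α.iseqv.refl _⟩ :=
      (inf_rel_iff _ _ _ _).mpr ⟨hη2, hΔ2⟩
    rw [h2] at hboth
    have heq := bot_rel_iff.mp hboth
    refine bot_rel_iff.mpr ?_
    have h11 : (B.evalTrm G t).1.1 = A.evalTrm (Sum.elim b v) t := by rw [heq]
    rw [eG1] at h11
    exact h11

end RefinementAux
/-! ### Chain machinery for generated congruences -/

/-- Substitution into terms. -/
def trmBind {σ : Sig} {V W : Type} (s : V → Trm σ W) : Trm σ V → Trm σ W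
  | .var v => s v
  | .op f ts => .op f (fun i => trmBind s (ts i))

lemma eval_trmBind {σ : Sig} (A : Alg σ) {V W : Type} (s : V → Trm σ W)
    (asg : W → A.carrier) (t : Trm σ V) :
    A.evalTrm asg (trmBind s t) =
      A.evalTrm (fun v => A.evalTrm asg (s v)) t := by
  induction t with
  | var v => rfl
  | op f ts ih =>
      show A.interp f _ = A.interp f _
      exact congrArg (A.interp f) (funext fun i => ih i)

variable {σ : Sig} {A : Alg σ}

/-- Diagonal element of `A(α)`. -/
def diagB (α : Congruence A) (x : A.carrier) : (algOn A α).carrier :=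
  ⟨(x, x), α.iseqv.refl x⟩

/-- One step in the generation of `Δ_{α,β}`: the images of a tuple of
β-diagonal generator pairs (with constants) under a term operation. -/
def StepRel (α β : Congruence A) (u v : (algOn A α).carrier) : Prop :=
  ∃ (m n : ℕ) (t : Trm σ (Sum (Fin m) (Fin n))) (x z : Fin m → A.carrier)
    (_ : ∀ i, β.rel (x i) (z i)) (cd : Fin n → (algOn A α).carrier),
    u = (algOn A α).evalTrm (Sum.elim (fun i => diagB α (x i)) cd) t ∧
    v = (algOn A α).evalTrm (Sum.elim (fun i => diagB α (z i)) cd) t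

lemma StepRel.refl (α β : Congruence A) (u : (algOn A α).carrier) :
    StepRel α β u u := by
  refine ⟨0, 1, .var (.inr 0), Fin.elim0, Fin.elim0, fun i => i.elim0,
    fun _ => u, rfl, rfl⟩

lemma StepRel.symm {α β : Congruence A} {u v : (algOn A α).carrier}
    (h : StepRel α β u v) : StepRel α β v u := by
  obtain ⟨m, n, t, x, z, hxz, cd, hu, hv⟩ := h
  exact ⟨m, n, t, z, x, fun i => β.iseqv.symm (hxz i), cd, hv, hu⟩

/-- `ChainRel` is the reflexive transitive closure of `StepRel`. -/
def ChainRel (α β : Congruence A) : (algOn A α).carrier → (algOn A α).carrier → Prop :=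
  Relation.ReflTransGen (StepRel α β)

lemma ChainRel.symm {α β : Congruence A} {u v : (algOn A α).carrier}
    (h : ChainRel α β u v) : ChainRel α β v u := by
  induction h with
  | refl => exact Relation.ReflTransGen.refl
  | tail _ hbc ih =>
      exact Relation.ReflTransGen.trans (Relation.ReflTransGen.single hbc.symm) ih

/-- Lifting a step through an operation in one position. -/
lemma StepRel.lift {α β : Congruence A} (f : σ.ops)
    (g : Fin (σ.arity f) → (algOn A α).carrier) (j : Fin (σ.arity f))
    {u v : (algOn A α).carrier} (h : StepRel α β u v) :
    StepRel α β ((algOn A α).interp f (Function.update g j u))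
      ((algOn A α).interp f (Function.update g j v)) := by
  classical
  obtain ⟨m, n, t, x, z, hxz, cd, hu, hv⟩ := h
  have main : ∀ (w : (algOn A α).carrier) (xx : Fin m → A.carrier),
      w = (algOn A α).evalTrm (Sum.elim (fun i => diagB α (xx i)) cd) t →
      (algOn A α).interp f (Function.update g j w) =
        (algOn A α).evalTrm (Sum.elim (fun i => diagB α (xx i)) (Fin.addCases cd g))
          (.op f (Function.update (fun i => Trm.var (.inr (Fin.natAdd n i))) j
            (trmBind (fun s => Trm.var (Sum.map id (Fin.castAdd (σ.arity f)) s)) t))) := by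
    intro w xx hw
    show (algOn A α).interp f (Function.update g j w) = (algOn A α).interp f _
    refine congrArg ((algOn A α).interp f) (funext fun i => ?_)
    by_cases hij : i = j
    · subst hij
      rw [Function.update_self, Function.update_self, eval_trmBind, hw]
      refine congrArg ((algOn A α).evalTrm · t) (funext fun s => ?_)
      cases s with
      | inl a => rfl
      | inr b =>
          show cd b = Fin.addCases cd g (Fin.castAdd _ b)
          rw [Fin.addCases_left]
    · rw [Function.update_of_ne hij, Function.update_of_ne hij]
      show g i = Fin.addCases cd g (Fin.natAdd n i)
      rw [Fin.addCases_right]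
  exact ⟨m, n + σ.arity f, _, x, z, hxz, Fin.addCases cd g, main u x hu, main v z hv⟩

lemma ChainRel.lift {α β : Congruence A} (f : σ.ops)
    (g : Fin (σ.arity f) → (algOn A α).carrier) (j : Fin (σ.arity f))
    {u v : (algOn A α).carrier} (h : ChainRel α β u v) :
    ChainRel α β ((algOn A α).interp f (Function.update g j u))
      ((algOn A α).interp f (Function.update g j v)) :=
  Relation.ReflTransGen.lift (fun w => (algOn A α).interp f (Function.update g j w))
    (fun _ _ hab => StepRel.lift f g j hab) _ _ h

lemma ChainRel.compat {α β : Congruence A} (f : σ.ops)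
    (a b : Fin (σ.arity f) → (algOn A α).carrier)
    (h : ∀ i, ChainRel α β (a i) (b i)) :
    ChainRel α β ((algOn A α).interp f a) ((algOn A α).interp f b) := by
  classical
  have key : ∀ s : Finset (Fin (σ.arity f)),
      ChainRel α β ((algOn A α).interp f a)
        ((algOn A α).interp f (fun i => if i ∈ s then b i else a i)) := by
    intro s
    induction s using Finset.induction_on with
    | empty =>
        have : (fun i => if i ∈ (∅ : Finset (Fin (σ.arity f))) then b i else a i) = a := by
          funext i; simp
        rw [this]
        exact Relation.ReflTransGen.refl
    | @insert j s hj ih =>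
        refine Relation.ReflTransGen.trans ih ?_
        have h1 : (fun i => if i ∈ insert j s then b i else a i) =
            Function.update (fun i => if i ∈ s then b i else a i) j (b j) := by
          funext i
          by_cases hij : i = j
          · subst hij; simp
          · simp [Function.update_of_ne hij, hij]
        have h2 : (fun i => if i ∈ s then b i else a i) =
            Function.update (fun i => if i ∈ s then b i else a i) j
              ((fun i => if i ∈ s then b i else a i) j) := by
          rw [Function.update_eq_self]
        rw [h1]
        conv_lhs => rw [h2]
        have : (fun i => if i ∈ s then b i else a i) j = a j := by simp [hj]
        rw [this]
        exact ChainRel.lift f _ j (h j)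
  have := key Finset.univ
  have heq : (fun i => if i ∈ (Finset.univ : Finset (Fin (σ.arity f))) then b i else a i) = b := by
    funext i; simp
  rwa [heq] at this

/-- The chain closure as a congruence on `A(α)`. -/
def chainCong (α β : Congruence A) : Congruence (algOn A α) where
  rel := ChainRel α β
  iseqv := ⟨fun _ => Relation.ReflTransGen.refl,
            ChainRel.symm,
            fun h1 h2 => Relation.ReflTransGen.trans h1 h2⟩
  compat := ChainRel.compat

lemma diagDelta_le_chainCong (α β : Congruence A) :
    diagDelta A α β ≤ chainCong α β := by
  refine sInf_le ?_
  intro x z hxz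
  refine Relation.ReflTransGen.single ?_
  exact ⟨1, 0, .var (.inl 0), fun _ => x, fun _ => z, fun _ => hxz,
    Fin.elim0, rfl, rfl⟩

lemma ChainRel.exists_fn {α β : Congruence A} {u v : (algOn A α).carrier}
    (h : ChainRel α β u v) :
    ∃ (k : ℕ) (c : ℕ → (algOn A α).carrier), c 0 = u ∧ c k = v ∧
      ∀ j, j < k → StepRel α β (c j) (c (j+1)) := by
  induction h with
  | refl => exact ⟨0, fun _ => u, rfl, rfl, fun j hj => absurd hj (Nat.not_lt_zero j)⟩
  | @tail b w _ hbw ih =>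
      obtain ⟨k, c, hc0, hck, hsteps⟩ := ih
      refine ⟨k + 1, fun j => if j = k + 1 then w else c j, ?_, ?_, ?_⟩
      · show (if (0:ℕ) = k + 1 then w else c 0) = u
        rw [if_neg (by omega)]
        exact hc0
      · show (if k + 1 = k + 1 then w else c (k+1)) = w
        rw [if_pos rfl]
      · intro j hj
        show StepRel α β (if j = k + 1 then w else c j)
          (if j + 1 = k + 1 then w else c (j+1))
        by_cases hjk : j = k
        · subst hjk
          rw [if_neg (by omega), if_pos rfl, hck]
          exact hbw
        · have hj1 : j + 1 ≠ k + 1 := by omega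
          have hj2 : j ≠ k + 1 := by omega
          rw [if_neg hj1, if_neg hj2]
          exact hsteps j (by omega)

/-- The twist map on `A(α)`. -/
def swapB (α : Congruence A) (u : (algOn A α).carrier) : (algOn A α).carrier :=
  ⟨(u.1.2, u.1.1), α.iseqv.symm u.2⟩

lemma evalB_swap (α : Congruence A) {V : Type} (t : Trm σ V)
    (F : V → (algOn A α).carrier) :
    swapB α ((algOn A α).evalTrm F t) = (algOn A α).evalTrm (fun v => swapB α (F v)) t := by
  apply Subtype.ext
  apply Prod.ext
  · show ((algOn A α).evalTrm F t).1.2 = ((algOn A α).evalTrm (fun v => swapB α (F v)) t).1.1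
    rw [evalOn_snd, evalOn_fst]
    rfl
  · show ((algOn A α).evalTrm F t).1.1 = ((algOn A α).evalTrm (fun v => swapB α (F v)) t).1.2
    rw [evalOn_fst, evalOn_snd]
    rfl

lemma StepRel.swap {α β : Congruence A} {u v : (algOn A α).carrier}
    (h : StepRel α β u v) : StepRel α β (swapB α u) (swapB α v) := by
  obtain ⟨m, n, t, x, z, hxz, cd, hu, hv⟩ := h
  refine ⟨m, n, t, x, z, hxz, fun r => swapB α (cd r), ?_, ?_⟩
  · rw [hu, evalB_swap]
    refine congrArg ((algOn A α).evalTrm · t) (funext fun s => ?_)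
    cases s with
    | inl i => rfl
    | inr r => rfl
  · rw [hv, evalB_swap]
    refine congrArg ((algOn A α).evalTrm · t) (funext fun s => ?_)
    cases s with
    | inl i => rfl
    | inr r => rfl

lemma ChainRel.swap {α β : Congruence A} {u v : (algOn A α).carrier}
    (h : ChainRel α β u v) : ChainRel α β (swapB α u) (swapB α v) :=
  Relation.ReflTransGen.lift (swapB α) (fun _ _ hab => StepRel.swap hab) _ _ h
/-! ### The collapse lemma -/

lemma collapse {σ : Sig} {V : Variety σ} (hT : HasTaylorTrm V)
    {A : Alg σ} (hA : V.Mem A) (α β : Congruence A)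
    (H1 : Centralizes β α ⊥) (H2 : Centralizes α (α ⊓ β) ⊥)
    (k : ℕ) (c : ℕ → (algOn A α).carrier)
    (hc : ∀ j, j < k → StepRel α β (c j) (c (j+1)))
    (hend : (c 0).1.1 = (c k).1.1) :
    (c 0).1.2 = (c k).1.2 := by
  classical
  -- A-level step data
  have hstep : ∀ j, j < k → ∃ (m n : ℕ) (t : Trm σ (Sum (Fin m) (Fin n)))
      (x z : Fin m → A.carrier) (cc dd : Fin n → A.carrier),
      (∀ i, β.rel (x i) (z i)) ∧ (∀ r, α.rel (cc r) (dd r)) ∧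
      (c j).1.1 = A.evalTrm (Sum.elim x cc) t ∧
      (c j).1.2 = A.evalTrm (Sum.elim x dd) t ∧
      (c (j+1)).1.1 = A.evalTrm (Sum.elim z cc) t ∧
      (c (j+1)).1.2 = A.evalTrm (Sum.elim z dd) t := by
    intro j hj
    obtain ⟨m, n, t, x, z, hxz, cd, hu, hv⟩ := hc j hj
    refine ⟨m, n, t, x, z, fun r => (cd r).1.1, fun r => (cd r).1.2, hxz,
      fun r => (cd r).2, ?_, ?_, ?_, ?_⟩
    · rw [hu, evalOn_fst]
      exact congrArg (A.evalTrm · t) (funext fun s => by cases s <;> rfl)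
    · rw [hu, evalOn_snd]
      exact congrArg (A.evalTrm · t) (funext fun s => by cases s <;> rfl)
    · rw [hv, evalOn_fst]
      exact congrArg (A.evalTrm · t) (funext fun s => by cases s <;> rfl)
    · rw [hv, evalOn_snd]
      exact congrArg (A.evalTrm · t) (funext fun s => by cases s <;> rfl)
  have hPQ : ∀ j, α.rel ((c j).1.1) ((c j).1.2) := fun j => (c j).2
  have hQβstep : ∀ j, j < k → β.rel ((c j).1.2) ((c (j+1)).1.2) := by
    intro j hj
    obtain ⟨m, n, t, x, z, cc, dd, hxz, hccdd, h1, h2, h3, h4⟩ := hstep j hj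
    rw [h2, h4]
    refine evalCongr β t ?_
    rintro (i | r)
    · exact hxz i
    · exact β.iseqv.refl _
  have hQ0j : ∀ j, j ≤ k → β.rel ((c 0).1.2) ((c j).1.2) := by
    intro j
    induction j with
    | zero => intro _; exact β.iseqv.refl _
    | succ j ih => intro hj; exact β.iseqv.trans (ih (by omega)) (hQβstep j (by omega))
  have hq0qkα : α.rel ((c 0).1.2) ((c k).1.2) := by
    have t1 : α.rel ((c 0).1.2) ((c 0).1.1) := α.iseqv.symm (hPQ 0)
    rw [hend] at t1
    exact α.iseqv.trans t1 (hPQ k)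
  obtain ⟨nT, T, hn0, hidem, hpat⟩ := hT
  -- The key transported Taylor identity
  have Ekey : ∀ (W Z : Fin nT → Bool),
      (∀ x y : A.carrier, A.evalTrm (fun l => cond (W l) x y) T =
        A.evalTrm (fun l => cond (Z l) x y) T) →
      ∀ (mv : Fin nT → ℕ), (∀ l, mv l ≤ k) →
        A.evalTrm (fun l => cond (W l) ((c (mv l)).1.1) ((c (mv l)).1.2)) T =
        A.evalTrm (fun l => cond (Z l) ((c (mv l)).1.1) ((c (mv l)).1.2)) T := by
    intro W Z hid
    have H : ∀ (N : ℕ) (mv : Fin nT → ℕ), Finset.univ.sum mv = N → (∀ l, mv l ≤ k) →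
        A.evalTrm (fun l => cond (W l) ((c (mv l)).1.1) ((c (mv l)).1.2)) T =
        A.evalTrm (fun l => cond (Z l) ((c (mv l)).1.1) ((c (mv l)).1.2)) T := by
      intro N
      induction N using Nat.strong_induction_on with
      | _ N ih =>
        intro mv hsum hbd
        by_cases hz : ∀ l, mv l = 0
        · have e1 : (fun l => cond (W l) ((c (mv l)).1.1) ((c (mv l)).1.2)) =
              (fun l => cond (W l) ((c 0).1.1) ((c 0).1.2)) :=
            funext fun l => by rw [hz l]
          have e2 : (fun l => cond (Z l) ((c (mv l)).1.1) ((c (mv l)).1.2)) =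
              (fun l => cond (Z l) ((c 0).1.1) ((c 0).1.2)) :=
            funext fun l => by rw [hz l]
          rw [e1, e2]
          exact hid _ _
        · push_neg at hz
          obtain ⟨l0, hl0⟩ := hz
          obtain ⟨j, hj⟩ := Nat.exists_eq_succ_of_ne_zero hl0
          have hjk : j < k := by have := hbd l0; omega
          obtain ⟨m, n, t, x, z, cc, dd, hxz, hccdd, h1, h2, h3, h4⟩ := hstep j hjk
          set mv' := Function.update mv l0 j with hmv'
          have hbd' : ∀ l, mv' l ≤ k := by
            intro l
            by_cases h : l = l0
            · subst h; rw [hmv', Function.update_self]; omega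
            · rw [hmv', Function.update_of_ne h]; exact hbd l
          have hsum' : Finset.univ.sum mv' < N := by
            rw [← hsum]
            have e1 : Finset.univ.sum mv' = j + (Finset.univ \ {l0}).sum mv := by
              rw [hmv', Finset.sum_update_of_mem (Finset.mem_univ l0)]
            have e2 : Finset.univ.sum mv = (Finset.univ \ {l0}).sum mv + mv l0 :=
              Finset.sum_eq_sum_sdiff_singleton_add (Finset.mem_univ l0) mv
            omega
          have Ej := ih _ hsum' mv' rfl hbd'
          -- prepare the columns
          set CU : Fin (n + nT) → A.carrier :=
            Fin.addCases (fun r => cond (W l0) (cc r) (dd r))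
              (fun l => cond (W l) ((c (mv' l)).1.1) ((c (mv' l)).1.2)) with hCU
          set CV : Fin (n + nT) → A.carrier :=
            Fin.addCases (fun r => cond (Z l0) (cc r) (dd r))
              (fun l => cond (Z l) ((c (mv' l)).1.1) ((c (mv' l)).1.2)) with hCV
          have hcol : ∀ idx, α.rel (CU idx) (CV idx) := by
            intro idx
            refine Fin.addCases (motive := fun idx => α.rel (CU idx) (CV idx)) ?_ ?_ idx
            · intro r
              rw [hCU, hCV]
              simp only [Fin.addCases_left]
              cases W l0 <;> cases Z l0
              · exact α.iseqv.refl _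
              · exact α.iseqv.symm (hccdd r)
              · exact hccdd r
              · exact α.iseqv.refl _
            · intro l
              rw [hCU, hCV]
              simp only [Fin.addCases_right]
              cases W l <;> cases Z l
              · exact α.iseqv.refl _
              · exact α.iseqv.symm (hPQ _)
              · exact hPQ _
              · exact α.iseqv.refl _
          -- the composite term
          set TS : Fin nT → Trm σ (Sum (Fin m) (Fin (n + nT))) :=
            Function.update (fun l => Trm.var (.inr (Fin.natAdd n l))) l0
              (trmBind (fun s => Trm.var (Sum.map id (Fin.castAdd nT) s)) t) with hTS
          have evalTS : ∀ (xx : Fin m → A.carrier) (CC : Fin (n + nT) → A.carrier),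
              A.evalTrm (Sum.elim xx CC) (trmBind TS T) =
              A.evalTrm (Function.update (fun l => CC (Fin.natAdd n l)) l0
                (A.evalTrm (Sum.elim xx (fun r => CC (Fin.castAdd nT r))) t)) T := by
            intro xx CC
            rw [eval_trmBind]
            refine congrArg (A.evalTrm · T) (funext fun l => ?_)
            by_cases h : l = l0
            · rw [h, hTS, Function.update_self, Function.update_self, eval_trmBind]
              refine congrArg (A.evalTrm · t) (funext fun s => ?_)
              cases s with
              | inl i => rfl
              | inr r => rfl
            · rw [hTS, Function.update_of_ne h, Function.update_of_ne h]
              rfl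
          -- computing the four sides
          have hside : ∀ (WW : Fin nT → Bool) (CC : Fin (n + nT) → A.carrier),
              (∀ r, CC (Fin.castAdd nT r) = cond (WW l0) (cc r) (dd r)) →
              (∀ l, CC (Fin.natAdd n l) =
                cond (WW l) ((c (mv' l)).1.1) ((c (mv' l)).1.2)) →
              ∀ (xx : Fin m → A.carrier) (jj : ℕ),
              A.evalTrm (Sum.elim xx cc) t = (c jj).1.1 →
              A.evalTrm (Sum.elim xx dd) t = (c jj).1.2 →
              ∀ (mm : Fin nT → ℕ), (∀ l, l ≠ l0 → mm l = mv' l) → mm l0 = jj →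
              A.evalTrm (Sum.elim xx CC) (trmBind TS T) =
              A.evalTrm (fun l => cond (WW l) ((c (mm l)).1.1) ((c (mm l)).1.2)) T := by
            intro WW CC hCCl hCCr xx jj hx1 hx2 mm hmm hmml0
            rw [evalTS]
            refine congrArg (A.evalTrm · T) (funext fun l => ?_)
            by_cases h : l = l0
            · rw [h, Function.update_self, hmml0]
              have e : (fun r => CC (Fin.castAdd nT r)) =
                  fun r => cond (WW l0) (cc r) (dd r) := funext hCCl
              rw [e]
              cases hb : WW l0
              · exact hx2
              · exact hx1
            · rw [Function.update_of_ne h, hCCr l, hmm l h]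
          have hCUl : ∀ r, CU (Fin.castAdd nT r) = cond (W l0) (cc r) (dd r) := by
            intro r; rw [hCU]; simp only [Fin.addCases_left]
          have hCUr : ∀ l, CU (Fin.natAdd n l) =
              cond (W l) ((c (mv' l)).1.1) ((c (mv' l)).1.2) := by
            intro l; rw [hCU]; simp only [Fin.addCases_right]
          have hCVl : ∀ r, CV (Fin.castAdd nT r) = cond (Z l0) (cc r) (dd r) := by
            intro r; rw [hCV]; simp only [Fin.addCases_left]
          have hCVr : ∀ l, CV (Fin.natAdd n l) =
              cond (Z l) ((c (mv' l)).1.1) ((c (mv' l)).1.2) := by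
            intro l; rw [hCV]; simp only [Fin.addCases_right]
          have hmvl0 : mv' l0 = j := by rw [hmv', Function.update_self]
          have hmm' : ∀ l, l ≠ l0 → mv l = mv' l := by
            intro l h; rw [hmv', Function.update_of_ne h]
          -- the premise of the term condition
          have prem : (⊥ : Congruence A).rel
              (A.evalTrm (Sum.elim x CU) (trmBind TS T))
              (A.evalTrm (Sum.elim x CV) (trmBind TS T)) := by
            refine bot_rel_iff.mpr ?_
            rw [hside W CU hCUl hCUr x j h1.symm h2.symm mv' (fun l _ => rfl) hmvl0,
                hside Z CV hCVl hCVr x j h1.symm h2.symm mv' (fun l _ => rfl) hmvl0]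
            exact Ej
          have happ := H1 m (n + nT) (trmBind TS T) x z CU CV hxz hcol prem
          have heq := bot_rel_iff.mp happ
          rw [hside W CU hCUl hCUr z (j+1) h3.symm h4.symm mv hmm' hj,
              hside Z CV hCVl hCVr z (j+1) h3.symm h4.symm mv hmm' hj] at heq
          exact heq
    intro mv
    exact H (Finset.univ.sum mv) mv rfl
  -- the per-coordinate transport using H2
  have trans_i : ∀ (i : Fin nT) (b : Fin nT → A.carrier),
      (∀ l, α.rel ((c 0).1.2) (b l)) →
      A.evalTrm (Function.update b i ((c 0).1.2)) T =
      A.evalTrm (Function.update b i ((c k).1.2)) T := by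
    intro i b hb
    obtain ⟨w0, z0, hne0, hid0⟩ := hpat i
    obtain ⟨W, Z, hne, hZi, hid⟩ : ∃ W Z : Fin nT → Bool, W i ≠ Z i ∧ Z i = false ∧
        (∀ x y : A.carrier, A.evalTrm (fun l => cond (W l) x y) T =
          A.evalTrm (fun l => cond (Z l) x y) T) := by
      cases hz : z0 i
      · exact ⟨w0, z0, by rw [hz]; exact hz ▸ hne0, hz, fun x y => hid0 A hA x y⟩
      · cases hw : w0 i
        · exact ⟨z0, w0, by rw [hz, hw]; exact fun hh => Bool.noConfusion hh, hw,
            fun x y => (hid0 A hA x y).symm⟩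
        · rw [hw, hz] at hne0; exact absurd rfl hne0
    have hWi : W i = true := by
      cases hw : W i
      · exact absurd (hw.trans hZi.symm) hne
      · rfl
    have E0 := Ekey W Z hid (fun _ => 0) (fun _ => Nat.zero_le k)
    have E1 := Ekey W Z hid (Function.update (fun _ : Fin nT => 0) i k) (by
      intro l
      by_cases h : l = i
      · rw [h, Function.update_self]
      · rw [Function.update_of_ne h]; exact Nat.zero_le k)
    have hflip : A.evalTrm (fun l => cond (W l) ((c ((fun _ : Fin nT => 0) l)).1.1)
          ((c ((fun _ : Fin nT => 0) l)).1.2)) T =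
        A.evalTrm (fun l => cond (W l)
          ((c (Function.update (fun _ : Fin nT => 0) i k l)).1.1)
          ((c (Function.update (fun _ : Fin nT => 0) i k l)).1.2)) T := by
      refine congrArg (A.evalTrm · T) (funext fun l => ?_)
      by_cases h : l = i
      · rw [h, Function.update_self, hWi]
        exact hend
      · rw [Function.update_of_ne h]
    have Gi := E0.symm.trans (hflip.trans E1)
    have hq0qkγ : (α ⊓ β).rel ((c 0).1.2) ((c k).1.2) :=
      (inf_rel_iff α β _ _).mpr ⟨hq0qkα, hQ0j k (le_refl k)⟩
    set TS2 : Fin nT → Trm σ (Sum (Fin nT) (Fin 1)) :=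
      Function.update (fun l => Trm.var (.inl l)) i (Trm.var (.inr 0)) with hTS2
    have evalTS2 : ∀ (rr : Fin nT → A.carrier) (e : A.carrier),
        A.evalTrm (Sum.elim rr (fun _ => e)) (trmBind TS2 T) =
        A.evalTrm (Function.update rr i e) T := by
      intro rr e
      rw [eval_trmBind]
      refine congrArg (A.evalTrm · T) (funext fun l => ?_)
      by_cases h : l = i
      · rw [h, hTS2, Function.update_self, Function.update_self]
        rfl
      · rw [hTS2, Function.update_of_ne h, Function.update_of_ne h]
        rfl
    have hrows : ∀ l, α.rel
        ((fun l => cond (Z l) ((c 0).1.1) ((c 0).1.2)) l) (b l) := by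
      intro l
      show α.rel (cond (Z l) ((c 0).1.1) ((c 0).1.2)) (b l)
      cases hzb : Z l
      · exact hb l
      · exact α.iseqv.trans (hPQ 0) (hb l)
    have hcols : ∀ r : Fin 1, (α ⊓ β).rel ((fun _ => (c 0).1.2) r)
        ((fun _ => (c k).1.2) r) := fun _ => hq0qkγ
    have g1 : Function.update (fun l => cond (Z l) ((c 0).1.1) ((c 0).1.2)) i ((c 0).1.2) =
        (fun l => cond (Z l) ((c ((fun _ : Fin nT => 0) l)).1.1)
          ((c ((fun _ : Fin nT => 0) l)).1.2)) := by
      funext l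
      by_cases h : l = i
      · rw [h, Function.update_self]
        show (c 0).1.2 = cond (Z i) ((c 0).1.1) ((c 0).1.2)
        rw [hZi]
        rfl
      · rw [Function.update_of_ne h]
    have g2 : Function.update (fun l => cond (Z l) ((c 0).1.1) ((c 0).1.2)) i ((c k).1.2) =
        (fun l => cond (Z l) ((c (Function.update (fun _ : Fin nT => 0) i k l)).1.1)
          ((c (Function.update (fun _ : Fin nT => 0) i k l)).1.2)) := by
      funext l
      by_cases h : l = i
      · rw [h, Function.update_self]
        show (c k).1.2 = cond (Z i)
          ((c (Function.update (fun _ : Fin nT => 0) i k i)).1.1)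
          ((c (Function.update (fun _ : Fin nT => 0) i k i)).1.2)
        rw [hZi, Function.update_self]
        rfl
      · rw [Function.update_of_ne h]
        show cond (Z l) ((c 0).1.1) ((c 0).1.2) = cond (Z l)
          ((c (Function.update (fun _ : Fin nT => 0) i k l)).1.1)
          ((c (Function.update (fun _ : Fin nT => 0) i k l)).1.2)
        rw [Function.update_of_ne h]
    have prem : (⊥ : Congruence A).rel
        (A.evalTrm (Sum.elim (fun l => cond (Z l) ((c 0).1.1) ((c 0).1.2))
          (fun _ => (c 0).1.2)) (trmBind TS2 T))
        (A.evalTrm (Sum.elim (fun l => cond (Z l) ((c 0).1.1) ((c 0).1.2))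
          (fun _ => (c k).1.2)) (trmBind TS2 T)) := by
      refine bot_rel_iff.mpr ?_
      rw [evalTS2, evalTS2, g1, g2]
      exact Gi
    have happ := H2 nT 1 (trmBind TS2 T)
      (fun l => cond (Z l) ((c 0).1.1) ((c 0).1.2)) b
      (fun _ => (c 0).1.2) (fun _ => (c k).1.2) hrows hcols prem
    have heq := bot_rel_iff.mp happ
    rw [evalTS2, evalTS2] at heq
    exact heq
  -- walk from all-q₀ to all-q_k
  have path : ∀ i0 : ℕ, i0 ≤ nT →
      A.evalTrm (fun l : Fin nT => if l.val < i0 then (c k).1.2 else (c 0).1.2) T =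
        (c 0).1.2 := by
    intro i0
    induction i0 with
    | zero =>
        intro _
        have e : (fun l : Fin nT => if l.val < 0 then (c k).1.2 else (c 0).1.2) =
            fun _ => (c 0).1.2 := funext fun l => if_neg (Nat.not_lt_zero _)
        rw [e]
        exact hidem A hA _
    | succ i0 ih =>
        intro hi0
        have hi : i0 < nT := by omega
        have hb : ∀ l : Fin nT, α.rel ((c 0).1.2)
            ((fun l : Fin nT => if l.val < i0 then (c k).1.2 else (c 0).1.2) l) := by
          intro l
          show α.rel ((c 0).1.2) (if l.val < i0 then (c k).1.2 else (c 0).1.2)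
          by_cases h : l.val < i0
          · rw [if_pos h]; exact hq0qkα
          · rw [if_neg h]; exact α.iseqv.refl _
        have ht := trans_i ⟨i0, hi⟩ _ hb
        have e1 : Function.update
            (fun l : Fin nT => if l.val < i0 then (c k).1.2 else (c 0).1.2)
            ⟨i0, hi⟩ ((c 0).1.2) =
            (fun l : Fin nT => if l.val < i0 then (c k).1.2 else (c 0).1.2) := by
          funext l
          by_cases h : l = ⟨i0, hi⟩
          · rw [h, Function.update_self]
            show (c 0).1.2 = if ((⟨i0, hi⟩ : Fin nT) : ℕ) < i0 then (c k).1.2 else (c 0).1.2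
            rw [if_neg (lt_irrefl i0)]
          · rw [Function.update_of_ne h]
        have e2 : Function.update
            (fun l : Fin nT => if l.val < i0 then (c k).1.2 else (c 0).1.2)
            ⟨i0, hi⟩ ((c k).1.2) =
            (fun l : Fin nT => if l.val < i0 + 1 then (c k).1.2 else (c 0).1.2) := by
          funext l
          by_cases h : l = ⟨i0, hi⟩
          · rw [h, Function.update_self]
            show (c k).1.2 = if ((⟨i0, hi⟩ : Fin nT) : ℕ) < i0 + 1 then (c k).1.2 else (c 0).1.2
            rw [if_pos (Nat.lt_succ_self i0)]
          · rw [Function.update_of_ne h]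
            show (if l.val < i0 then (c k).1.2 else (c 0).1.2) =
              (if l.val < i0 + 1 then (c k).1.2 else (c 0).1.2)
            have hne : l.val ≠ i0 := fun hh => h (Fin.ext hh)
            by_cases h2 : l.val < i0
            · rw [if_pos h2, if_pos (by omega)]
            · rw [if_neg h2, if_neg (by omega)]
        rw [e1, e2] at ht
        rw [← ht]
        exact ih (by omega)
  have hfin := path nT (le_refl nT)
  have e : (fun l : Fin nT => if l.val < nT then (c k).1.2 else (c 0).1.2) =
      fun _ => (c k).1.2 := funext fun l => if_pos l.isLt
  rw [e, hidem A hA] at hfin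
  exact hfin.symm
/-- The hard direction: (a) implies (b), using the Taylor term. -/
lemma key_hard {σ : Sig} (V : Variety σ) (hT : HasTaylorTrm V)
    {A : Alg σ} (hA : V.Mem A) (α β : Congruence A)
    (ha1 : commC β α = ⊥) (ha2 : commC α (α ⊓ β) = ⊥) :
    eta1 A α ⊓ diagDelta A α β = ⊥ ∧ eta2 A α ⊓ diagDelta A α β = ⊥ := by
  have H1 : Centralizes β α ⊥ := (commC_eq_bot_iff β α).mp ha1
  have H2 : Centralizes α (α ⊓ β) ⊥ := (commC_eq_bot_iff _ _).mp ha2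
  constructor
  · rw [cong_eq_bot_iff]
    intro u v hr
    obtain ⟨h1, hΔ⟩ := (inf_rel_iff _ _ u v).mp hr
    have hch : ChainRel α β u v := diagDelta_le_chainCong α β u v hΔ
    obtain ⟨k, c, hc0, hck, hsteps⟩ := ChainRel.exists_fn hch
    have hfst : (c 0).1.1 = (c k).1.1 := by rw [hc0, hck]; exact h1
    have hsnd := collapse hT hA α β H1 H2 k c hsteps hfst
    rw [hc0, hck] at hsnd
    apply Subtype.ext
    apply Prod.ext
    · exact h1
    · exact hsnd
  · rw [cong_eq_bot_iff]
    intro u v hr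
    obtain ⟨h2, hΔ⟩ := (inf_rel_iff _ _ u v).mp hr
    have hch : ChainRel α β (swapB α u) (swapB α v) :=
      ChainRel.swap (diagDelta_le_chainCong α β u v hΔ)
    obtain ⟨k, c, hc0, hck, hsteps⟩ := ChainRel.exists_fn hch
    have hfst : (c 0).1.1 = (c k).1.1 := by rw [hc0, hck]; exact h2
    have hsnd := collapse hT hA α β H1 H2 k c hsteps hfst
    rw [hc0, hck] at hsnd
    apply Subtype.ext
    apply Prod.ext
    · exact hsnd
    · exact h2

/-- If a variety `V` has a Taylor term, then for `A ∈ V` and congruences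
`α, β` the four listed conditions are equivalent; in particular `V` satisfies
the quasi-identity `[β,α] = 0 & [α,α∩β] = 0 ⟹ [α,β] = 0`. -/
theorem refinement {σ : Sig} (V : Variety σ) (hT : HasTaylorTrm V)
    (A : Alg σ) (hA : V.Mem A) (α β : Congruence A) :
    List.TFAE [
      -- (a)
      commC β α = ⊥ ∧ commC α (α ⊓ β) = ⊥,
      -- (b) Δ_{α,β} is disjoint from the projection kernels of A(α)
      eta1 A α ⊓ diagDelta A α β = ⊥ ∧ eta2 A α ⊓ diagDelta A α β = ⊥,
      -- (c)
      commC α β = ⊥ ∧ commC β (α ⊓ β) = ⊥,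
      -- (d) Δ_{β,α} is disjoint from the projection kernels of A(β)
      eta1 A β ⊓ diagDelta A β α = ⊥ ∧ eta2 A β ⊓ diagDelta A β α = ⊥ ]
    ∧ ((commC β α = ⊥ ∧ commC α (α ⊓ β) = ⊥) → commC α β = ⊥) := by
  have h12 : (commC β α = ⊥ ∧ commC α (α ⊓ β) = ⊥) →
      (eta1 A α ⊓ diagDelta A α β = ⊥ ∧ eta2 A α ⊓ diagDelta A α β = ⊥) :=
    fun h => key_hard V hT hA α β h.1 h.2
  have h23 : (eta1 A α ⊓ diagDelta A α β = ⊥ ∧ eta2 A α ⊓ diagDelta A α β = ⊥) →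
      (commC α β = ⊥ ∧ commC β (α ⊓ β) = ⊥) :=
    fun h => key_bc α β h.1 h.2
  have h34 : (commC α β = ⊥ ∧ commC β (α ⊓ β) = ⊥) →
      (eta1 A β ⊓ diagDelta A β α = ⊥ ∧ eta2 A β ⊓ diagDelta A β α = ⊥) := by
    intro h
    refine key_hard V hT hA β α h.1 ?_
    rw [inf_comm]
    exact h.2
  have h41 : (eta1 A β ⊓ diagDelta A β α = ⊥ ∧ eta2 A β ⊓ diagDelta A β α = ⊥) →
      (commC β α = ⊥ ∧ commC α (α ⊓ β) = ⊥) := by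
    intro h
    obtain ⟨hx, hy⟩ := key_bc β α h.1 h.2
    rw [inf_comm] at hy
    exact ⟨hx, hy⟩
  refine ⟨?_, fun h => (h23 (h12 h)).1⟩
  tfae_have 1 → 2 := h12
  tfae_have 2 → 3 := h23
  tfae_have 3 → 4 := h34
  tfae_have 4 → 1 := h41
  tfae_finish
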